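/- Let Λ = diag(μ_1,…,μ_n) be invertible diagonal, and for k = 1,…,N let Λ_k be a diagonal matrix with Λ_k^N = Λ, such that for each j the (j,j) entries of Λ_1,…,Λ_N run over all N distinct N-th roots of μ_j. Define the nN×nN block matrix 𝒮 whose (p,k) block is (1/√N) Λ_k^{−(N−p)} for p = 1,…,N. Then 𝒮 𝒮† = diag((ΛΛ†)^{−(N−1)/N}, (ΛΛ†)^{−(N−2)/N}, …, (ΛΛ†)^{−1/N}, I). -/

import Mathlib

open Matrix Finset

-- sum of m-th powers of the N distinct N-th roots of unity vanishes
lemma sum_pow_roots_unity {N : ℕ} (hN : 0 < N) (e : Fin N → ℂ)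
    (he : ∀ k, e k ^ N = 1) (hinj : Function.Injective e)
    {m : ℕ} (hm : 0 < m) (hmN : m < N) : ∑ k, e k ^ m = 0 := by
  obtain ⟨ζ, hζ⟩ : ∃ ζ : ℂ, IsPrimitiveRoot ζ N := ⟨_, Complex.isPrimitiveRoot_exp N hN.ne'⟩
  have hcard : (Polynomial.nthRootsFinset N (1 : ℂ)).card = N := hζ.card_nthRootsFinset
  have himg : ∀ (f : Fin N → ℂ), (∀ k, f k ^ N = 1) → Function.Injective f →
      Finset.image f Finset.univ = Polynomial.nthRootsFinset N (1 : ℂ) := by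
    intro f hf hfi
    apply Finset.eq_of_subset_of_card_le
    · intro z hz
      simp only [Finset.mem_image, Finset.mem_univ, true_and] at hz
      obtain ⟨k, rfl⟩ := hz
      exact (Polynomial.mem_nthRootsFinset hN (1 : ℂ)).2 (hf k)
    · rw [hcard, Finset.card_image_of_injective _ hfi, Finset.card_univ, Fintype.card_fin]
  set g : Fin N → ℂ := fun i => ζ ^ (i : ℕ) with hg
  have hgroot : ∀ i, g i ^ N = 1 := by
    intro i
    simp only [hg]
    rw [← pow_mul, mul_comm, pow_mul, hζ.pow_eq_one, one_pow]
  have hginj : Function.Injective g := by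
    intro i j h
    exact Fin.ext (hζ.pow_inj i.isLt j.isLt h)
  have h1 : ∑ k, e k ^ m = ∑ z ∈ Polynomial.nthRootsFinset N (1 : ℂ), z ^ m := by
    rw [← himg e he hinj, Finset.sum_image (fun a _ b _ h => hinj h)]
  have h2 : ∑ i, g i ^ m = ∑ z ∈ Polynomial.nthRootsFinset N (1 : ℂ), z ^ m := by
    rw [← himg g hgroot hginj, Finset.sum_image (fun a _ b _ h => hginj h)]
  rw [h1, ← h2]
  have hz1 : ζ ^ m ≠ 1 := hζ.pow_ne_one_of_pos_of_lt hm.ne' hmN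
  have h3 : ∑ i : Fin N, g i ^ m = ∑ i ∈ Finset.range N, (ζ ^ m) ^ i := by
    simp only [hg]
    rw [Fin.sum_univ_eq_sum_range (fun i => (ζ ^ i) ^ m) N]
    exact Finset.sum_congr rfl fun i _ => by rw [← pow_mul, mul_comm, pow_mul]
  rw [h3, geom_sum_eq hz1 N, ← pow_mul, mul_comm m N, pow_mul, hζ.pow_eq_one, one_pow,
    sub_self, zero_div]

lemma sum_zpow_eq_zero {N : ℕ} (hN : 0 < N) (dd : Fin N → ℂ) (μ : ℂ) (hμ : μ ≠ 0)
    (hroot : ∀ k, dd k ^ N = μ) (hinj : Function.Injective dd)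
    {m : ℤ} (hm : m ≠ 0) (hmN : m.natAbs < N) : ∑ k, dd k ^ m = 0 := by
  have hd0 : ∀ k, dd k ≠ 0 := fun k h => hμ (by rw [← hroot k, h, zero_pow hN.ne'])
  set c : ℂ := dd ⟨0, hN⟩ with hc
  have hcne : c ≠ 0 := hd0 _
  set e : Fin N → ℂ := fun k => dd k * c⁻¹ with he
  have heroot : ∀ k, e k ^ N = 1 := by
    intro k
    rw [he]; simp only [mul_pow, hroot, inv_pow, hroot]
    field_simp
    rw [hc, hroot]
  have he0 : ∀ k, e k ≠ 0 := fun k => mul_ne_zero (hd0 k) (inv_ne_zero hcne)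
  have heinj : Function.Injective e := by
    intro a b h
    apply hinj
    have := mul_right_cancel₀ (inv_ne_zero hcne) h
    exact this
  have hdd : ∀ k, dd k ^ m = e k ^ m * c ^ m := by
    intro k
    rw [← mul_zpow]
    congr 1
    exact (inv_mul_cancel_right₀ hcne (dd k)).symm
  have hsum : ∑ k, dd k ^ m = (∑ k, e k ^ m) * c ^ m := by
    rw [Finset.sum_mul]
    exact Finset.sum_congr rfl fun k _ => hdd k
  rw [hsum]
  -- reduce exponent modulo N
  set m' : ℕ := (m % (N : ℤ)).toNat with hm'
  have hNz : (0:ℤ) < (N:ℤ) := by exact_mod_cast hN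
  have hmod_nonneg : 0 ≤ m % (N:ℤ) := Int.emod_nonneg m hNz.ne'
  have hmod_lt : m % (N:ℤ) < N := Int.emod_lt_of_pos m hNz
  have hmod_ne : m % (N:ℤ) ≠ 0 := by
    intro h
    have hdvd : (N:ℤ) ∣ m := Int.dvd_of_emod_eq_zero h
    have : N ∣ m.natAbs := Int.natAbs_dvd_natAbs.2 (by simpa using hdvd)
    have := Nat.le_of_dvd (Int.natAbs_pos.2 hm) this
    omega
  have hm'pos : 0 < m' := by
    simp only [hm']
    omega
  have hm'lt : m' < N := by omega
  have hepow : ∀ k, e k ^ m = e k ^ m' := by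
    intro k
    have : m = (N:ℤ) * (m / N) + m % N := (Int.mul_ediv_add_emod m N).symm
    rw [this, zpow_add₀ (he0 k), _root_.zpow_mul, zpow_natCast, heroot, _root_.one_zpow, one_mul,
      hm', ← zpow_natCast, Int.toNat_of_nonneg hmod_nonneg]
  rw [show (∑ k, e k ^ m) = ∑ k, e k ^ m' from Finset.sum_congr rfl fun k _ => hepow k,
    sum_pow_roots_unity hN e heroot heinj hm'pos hm'lt, zero_mul]

theorem S_mul_S_dagger (n N : ℕ) (hN : 0 < N)
    (μ : Fin n → ℂ) (hμ : ∀ j, μ j ≠ 0)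
    (d : Fin N → Fin n → ℂ)
    (hroot : ∀ k j, (d k j) ^ N = μ j)
    (hdistinct : ∀ j, Function.Injective (fun k => d k j))
    (S : Matrix (Fin N × Fin n) (Fin N × Fin n) ℂ)
    (hS : ∀ P Q : Fin N × Fin n, S P Q =
      if P.2 = Q.2 then
        ((1 / Real.sqrt N : ℝ) : ℂ) * (d Q.1 P.2) ^ (-((N - 1 - (P.1 : ℕ) : ℕ) : ℤ))
      else 0) :
    S * Sᴴ = fun P Q =>
      if P = Q then
        (((‖μ P.2‖ ^ 2) ^ (-(((N - 1 - (P.1 : ℕ) : ℕ) : ℝ) / N)) : ℝ) : ℂ)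
      else 0 := by
  funext P Q
  have hd0 : ∀ k j, d k j ≠ 0 := fun k j h => hμ j (by rw [← hroot k j, h, zero_pow hN.ne'])
  set c₁ : ℂ := ((1 / Real.sqrt N : ℝ) : ℂ) with hc₁
  set a : ℕ := N - 1 - (P.1 : ℕ) with ha
  set b : ℕ := N - 1 - (Q.1 : ℕ) with hb
  have hterm : ∀ R : Fin N × Fin n, S P R * Sᴴ R Q =
      if P.2 = R.2 ∧ Q.2 = R.2 then
        (c₁ * d R.1 P.2 ^ (-(a : ℤ))) *
          (starRingEnd ℂ) (c₁ * d R.1 Q.2 ^ (-(b : ℤ))) else 0 := by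
    intro R
    rw [Matrix.conjTranspose_apply, hS, hS, Complex.star_def]
    by_cases h1 : P.2 = R.2 <;> by_cases h2 : Q.2 = R.2 <;> simp [h1, h2, ha, hb]
  rw [Matrix.mul_apply]
  simp only [hterm]
  by_cases hj : P.2 = Q.2
  · -- same column block
    set r : ℝ := ‖μ Q.2‖ with hr'
    have hr : 0 < r := by
      rw [hr']; exact (norm_pos_iff.mpr (hμ Q.2))
    set T : ℝ := r ^ ((N : ℝ))⁻¹ with hT
    have hNR : (N : ℝ) ≠ 0 := Nat.cast_ne_zero.2 hN.ne'
    have hTpos : 0 < T := Real.rpow_pos_of_pos hr _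
    have habs : ∀ k, ‖d k Q.2‖ = T := by
      intro k
      have h1 : ‖d k Q.2‖ ^ N = r := by rw [← norm_pow, hroot]
      rw [hT, ← h1, Real.pow_rpow_inv_natCast (norm_nonneg _) hN.ne']
    have hsum1 : (∑ R : Fin N × Fin n,
        if P.2 = R.2 ∧ Q.2 = R.2 then
          (c₁ * d R.1 P.2 ^ (-(a : ℤ))) *
            (starRingEnd ℂ) (c₁ * d R.1 Q.2 ^ (-(b : ℤ))) else 0)
        = ∑ k : Fin N, (c₁ * d k Q.2 ^ (-(a : ℤ))) *
            (starRingEnd ℂ) (c₁ * d k Q.2 ^ (-(b : ℤ))) := by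
      rw [Fintype.sum_prod_type]
      refine Finset.sum_congr rfl fun k _ => ?_
      rw [hj]
      simp [Finset.sum_ite_eq]
    rw [hsum1]
    have hterm2 : ∀ k : Fin N, (c₁ * d k Q.2 ^ (-(a : ℤ))) *
        (starRingEnd ℂ) (c₁ * d k Q.2 ^ (-(b : ℤ)))
        = c₁ ^ 2 * ((T ^ 2 : ℝ) : ℂ) ^ (-(b : ℤ)) * d k Q.2 ^ ((b : ℤ) - (a : ℤ)) := by
      intro k
      have hdk : d k Q.2 ≠ 0 := hd0 k Q.2
      have hconj : (starRingEnd ℂ) (d k Q.2) = ((T ^ 2 : ℝ) : ℂ) * (d k Q.2)⁻¹ := by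
        rw [← habs k, Complex.sq_norm, eq_mul_inv_iff_mul_eq₀ hdk, mul_comm]
        exact Complex.mul_conj _
      rw [_root_.map_mul, Complex.conj_ofReal, map_zpow₀, hconj, mul_zpow, _root_.inv_zpow, ← _root_.zpow_neg,
        neg_neg, sub_eq_add_neg, zpow_add₀ hdk]
      ring
    rw [Finset.sum_congr rfl fun k _ => hterm2 k]
    by_cases hPQ : P = Q
    · subst hPQ
      simp only [show (b : ℤ) - (a : ℤ) = 0 by rw [hb, ha, sub_self], zpow_zero, if_pos rfl, ↓reduceIte]
      rw [Finset.sum_const, Finset.card_univ, Fintype.card_fin, nsmul_eq_mul, mul_one]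
      have hc2 : c₁ ^ 2 = ((N : ℝ)⁻¹ : ℝ) := by
        rw [hc₁, ← Complex.ofReal_pow]
        congr 1
        rw [div_pow, one_pow, Real.sq_sqrt (Nat.cast_nonneg N), one_div]
      have hreal : ((T ^ 2 : ℝ)) ^ (-(b : ℤ)) = (r ^ 2) ^ (-((b : ℝ)) / N) := by
        rw [hT, ← Real.rpow_intCast ((r ^ ((N:ℝ))⁻¹) ^ 2), ← Real.rpow_natCast (r ^ ((N:ℝ))⁻¹) 2,
          ← Real.rpow_natCast r 2, ← Real.rpow_mul hr.le, ← Real.rpow_mul hr.le,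
          ← Real.rpow_mul hr.le]
        congr 1
        push_cast
        field_simp
      rw [hc2, ← Complex.ofReal_zpow, hreal, ← Complex.ofReal_natCast, ← Complex.ofReal_mul,
        ← Complex.ofReal_mul]
      congr 1
      rw [← mul_assoc, mul_inv_cancel₀ hNR, one_mul, ← hr', neg_div]
    · -- off-diagonal: sum of roots powers vanishes
      have hP1 : P.1 ≠ Q.1 := by
        intro h
        exact hPQ (Prod.ext h hj)
      have hab : a ≠ b := by
        have h1 := P.1.isLt
        have h2 := Q.1.isLt
        intro h
        apply hP1
        apply Fin.ext
        omega
      have hm : (b : ℤ) - (a : ℤ) ≠ 0 := by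
        intro h
        exact hab (by omega)
      have hmN : ((b : ℤ) - (a : ℤ)).natAbs < N := by
        have h1 := P.1.isLt
        have h2 := Q.1.isLt
        omega
      rw [← Finset.mul_sum,
        sum_zpow_eq_zero hN (fun k => d k Q.2) (μ Q.2) (hμ Q.2) (fun k => hroot k Q.2)
          (hdistinct Q.2) hm hmN, mul_zero, if_neg hPQ]
  · -- different column blocks: everything vanishes
    have hPQ : P ≠ Q := fun h => hj (by rw [h])
    rw [if_neg hPQ]
    apply Finset.sum_eq_zero
    intro R _
    rw [if_neg]
    rintro ⟨h1, h2⟩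
    exact hj (h1.trans h2.symm)
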